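/- Quaternionic variational (Welch-type) characterisation of tight frames: let v_1, …, v_n ∈ ℍ^d, not all zero, with synthesis matrix V = [v_1, …, v_n]. Then ∑_{j=1}^n ∑_{k=1}^n |⟨v_j, v_k⟩|² ≥ (1/d)·(∑_{j=1}^n ‖v_j‖²)², with equality if and only if there is a real A > 0 with V·Vᴴ = A·I_d (i.e., (v_j) is a tight frame for ℍ^d). -/

import Mathlib

open Quaternion Matrix BigOperators

/-- Euclidean inner product on `ℍ^d`: `⟨v,w⟩ = ∑ i, conj (w i) * v i`
(linear in the first variable). -/
noncomputable def qip {d : ℕ} (v w : Fin d → ℍ[ℝ]) : ℍ[ℝ] :=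
  ∑ i, star (w i) * v i

/-- Squared Euclidean norm on `ℍ^d`, a nonnegative real. -/
noncomputable def nsq {d : ℕ} (v : Fin d → ℍ[ℝ]) : ℝ :=
  ∑ i, Quaternion.normSq (v i)


lemma re_sum {ι : Type*} (s : Finset ι) (f : ι → ℍ[ℝ]) :
    (∑ i ∈ s, f i).re = ∑ i ∈ s, (f i).re := by
  classical
  induction s using Finset.induction with
  | empty => simp
  | insert _ _ h ih => simp [Finset.sum_insert h, ih]

lemma coe_sum' {ι : Type*} (s : Finset ι) (f : ι → ℝ) :
    ((∑ i ∈ s, f i : ℝ) : ℍ[ℝ]) = ∑ i ∈ s, ((f i : ℝ) : ℍ[ℝ]) := by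
  classical
  induction s using Finset.induction with
  | empty => simp
  | insert _ _ h ih => simp [Finset.sum_insert h, Quaternion.coe_add, ih]

lemma smul_one_apply {d : ℕ} (A : ℝ) (i l : Fin d) :
    (A • (1 : Matrix (Fin d) (Fin d) ℍ[ℝ])) i l = if i = l then ((A : ℍ[ℝ])) else 0 := by
  rw [Matrix.smul_apply, Matrix.one_apply]
  split
  · ext <;> simp
  · simp

lemma re_mul_comm (a b : ℍ[ℝ]) : (a * b).re = (b * a).re := by
  simp [Quaternion.re_mul]; ring

lemma sum4_swap {α β : Type*} [Fintype α] [Fintype β] (f : α → α → β → β → ℝ) :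
    ∑ a, ∑ b, ∑ c, ∑ e, f a b c e = ∑ c, ∑ e, ∑ a, ∑ b, f a b c e := by
  calc ∑ a, ∑ b, ∑ c, ∑ e, f a b c e
      = ∑ a, ∑ c, ∑ b, ∑ e, f a b c e :=
        Finset.sum_congr rfl fun a _ => Finset.sum_comm
    _ = ∑ c, ∑ a, ∑ b, ∑ e, f a b c e := Finset.sum_comm
    _ = ∑ c, ∑ a, ∑ e, ∑ b, f a b c e :=
        Finset.sum_congr rfl fun c _ => Finset.sum_congr rfl fun a _ => Finset.sum_comm
    _ = ∑ c, ∑ e, ∑ a, ∑ b, f a b c e :=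
        Finset.sum_congr rfl fun c _ => Finset.sum_comm

lemma key {d n : ℕ} (v : Fin n → Fin d → ℍ[ℝ]) :
    ∑ j, ∑ k, Quaternion.normSq (qip (v j) (v k)) =
    ∑ i, ∑ l, Quaternion.normSq (∑ j, v j i * star (v j l)) := by
  simp only [qip, Quaternion.normSq_def, star_sum, Fintype.sum_mul_sum, re_sum,
    StarMul.star_mul, star_star]
  rw [sum4_swap]
  apply Finset.sum_congr rfl; intro i _
  apply Finset.sum_congr rfl; intro l _
  rw [Finset.sum_comm]
  apply Finset.sum_congr rfl; intro j _
  apply Finset.sum_congr rfl; intro k _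
  simp [Quaternion.re_mul]
  ring

/-- The quaternionic variational (Welch-type) characterisation of tight frames:
for `v_1, …, v_n ∈ ℍ^d`, not all zero,
`∑_j ∑_k |⟨v_j,v_k⟩|² ≥ (1/d) (∑_j ‖v_j‖²)²`, with equality iff `(v_j)` is a
tight frame for `ℍ^d`, i.e. `V Vᴴ = A I_d` for some real `A > 0`. -/
theorem quaternionic_variational_characterisation (d n : ℕ)
    (v : Fin n → (Fin d → ℍ[ℝ])) (hv : ∃ j, v j ≠ 0) :
    (∑ j, ∑ k, Quaternion.normSq (qip (v j) (v k)) ≥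
      (1 / (d : ℝ)) * (∑ j, nsq (v j)) ^ 2) ∧
    ((∑ j, ∑ k, Quaternion.normSq (qip (v j) (v k)) =
        (1 / (d : ℝ)) * (∑ j, nsq (v j)) ^ 2) ↔
      ∃ A : ℝ, 0 < A ∧
        (Matrix.of fun i j => v j i) * (Matrix.of fun i j => v j i)ᴴ =
          A • (1 : Matrix (Fin d) (Fin d) ℍ[ℝ])) := by
  classical
  set T : Fin d → Fin d → ℍ[ℝ] := fun i l => ∑ j, v j i * star (v j l) with hT
  set t : Fin d → ℝ := fun i => ∑ j, Quaternion.normSq (v j i) with ht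
  have hMent : ∀ i l, ((Matrix.of fun i j => v j i) * (Matrix.of fun i j => v j i)ᴴ) i l
      = T i l := by
    intro i l
    simp [Matrix.mul_apply, Matrix.conjTranspose_apply, hT]
  have htrace : ∑ j, nsq (v j) = ∑ i, t i := by
    simp only [nsq, ht]; exact Finset.sum_comm
  have hTdiag : ∀ i, T i i = ((t i : ℝ) : ℍ[ℝ]) := by
    intro i
    simp only [hT, ht, Quaternion.self_mul_star]
    rw [coe_sum']
  have hdiagSq : ∀ i, Quaternion.normSq (T i i) = t i ^ 2 := by
    intro i; rw [hTdiag i, Quaternion.normSq_coe]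
  have hkey : ∑ j, ∑ k, Quaternion.normSq (qip (v j) (v k)) =
      ∑ i, ∑ l, Quaternion.normSq (T i l) := key v
  obtain ⟨j0, hj0⟩ := hv
  obtain ⟨i0, hi0⟩ := Function.ne_iff.mp hj0
  simp only [Pi.zero_apply] at hi0
  have hti0 : 0 < t i0 := by
    have h1 : 0 < Quaternion.normSq (v j0 i0) :=
      lt_of_le_of_ne Quaternion.normSq_nonneg (Ne.symm (Quaternion.normSq_ne_zero.mpr hi0))
    calc (0:ℝ) < Quaternion.normSq (v j0 i0) := h1
      _ ≤ t i0 := Finset.single_le_sum (f := fun j => Quaternion.normSq (v j i0))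
          (fun j _ => Quaternion.normSq_nonneg) (Finset.mem_univ j0)
  have htot : 0 < ∑ i, t i := by
    calc (0:ℝ) < t i0 := hti0
      _ ≤ ∑ i, t i := Finset.single_le_sum (f := t)
          (fun i _ => Finset.sum_nonneg fun j _ => Quaternion.normSq_nonneg)
          (Finset.mem_univ i0)
  have hd0 : d ≠ 0 := by rintro rfl; exact i0.elim0
  have hd : (0:ℝ) < d := by exact_mod_cast Nat.pos_of_ne_zero hd0
  have hsplit : ∑ i, ∑ l, Quaternion.normSq (T i l) =
      ∑ i, t i ^ 2 + ∑ i, ∑ l ∈ Finset.univ.erase i, Quaternion.normSq (T i l) := by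
    rw [← Finset.sum_add_distrib]
    refine Finset.sum_congr rfl fun i _ => ?_
    rw [← hdiagSq i]
    exact (Finset.add_sum_erase _ (fun l => Quaternion.normSq (T i l)) (Finset.mem_univ i)).symm
  have hoff_nonneg : 0 ≤ ∑ i, ∑ l ∈ Finset.univ.erase i, Quaternion.normSq (T i l) :=
    Finset.sum_nonneg fun i _ => Finset.sum_nonneg fun l _ => Quaternion.normSq_nonneg
  have hCSid : ∑ i, ∑ l, (t i - t l) ^ 2 =
      2 * ((d:ℝ) * ∑ i, t i ^ 2 - (∑ i, t i) ^ 2) := by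
    simp only [sub_sq, Finset.sum_add_distrib, Finset.sum_sub_distrib, Finset.sum_const,
      Finset.card_univ, Fintype.card_fin, nsmul_eq_mul, ← Finset.mul_sum, ← Finset.sum_mul]
    ring
  have hCS : (1 / (d:ℝ)) * (∑ i, t i) ^ 2 ≤ ∑ i, t i ^ 2 := by
    have h0 : 0 ≤ ∑ i, ∑ l, (t i - t l) ^ 2 :=
      Finset.sum_nonneg fun i _ => Finset.sum_nonneg fun l _ => sq_nonneg _
    rw [hCSid] at h0
    rw [div_mul_eq_mul_div, one_mul, div_le_iff₀ hd]
    nlinarith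
  constructor
  · rw [hkey, htrace, hsplit]
    nlinarith
  · constructor
    · intro hEq
      rw [hkey, htrace, hsplit] at hEq
      have hCS' : ∑ i, t i ^ 2 = (1 / (d:ℝ)) * (∑ i, t i) ^ 2 := by linarith
      have hoff : ∑ i, ∑ l ∈ Finset.univ.erase i, Quaternion.normSq (T i l) = 0 := by linarith
      have hds : (d:ℝ) * ∑ i, t i ^ 2 = (∑ i, t i) ^ 2 := by
        rw [hCS']
        field_simp
      have hconst : ∀ i, t i = (∑ i, t i) / d := by
        have hzero : ∑ i, ∑ l, (t i - t l) ^ 2 = 0 := by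
          rw [hCSid, hds]; ring
        have hterm : ∀ i l : Fin d, (t i - t l) ^ 2 = 0 := by
          intro i l
          have h1 := (Finset.sum_eq_zero_iff_of_nonneg
            (fun i _ => Finset.sum_nonneg fun l _ => sq_nonneg ((t i - t l)))).mp hzero i
            (Finset.mem_univ i)
          exact (Finset.sum_eq_zero_iff_of_nonneg (fun l _ => sq_nonneg _)).mp h1 l
            (Finset.mem_univ l)
        intro i
        have hall : ∀ l, t l = t i := by
          intro l
          have h2 := sq_eq_zero_iff.mp (hterm l i)
          linarith
        have h3 : ∑ l, t l = (d:ℝ) * t i := by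
          rw [Finset.sum_congr rfl fun l _ => hall l]
          simp [Finset.card_univ, mul_comm]
        rw [h3]
        field_simp
      have hoffzero : ∀ i l, i ≠ l → T i l = 0 := by
        intro i l hne
        have h1 := (Finset.sum_eq_zero_iff_of_nonneg
          (fun i _ => Finset.sum_nonneg fun l _ => Quaternion.normSq_nonneg)).mp hoff i
          (Finset.mem_univ i)
        have h2 := (Finset.sum_eq_zero_iff_of_nonneg
          (fun l _ => Quaternion.normSq_nonneg)).mp h1 l
          (Finset.mem_erase.mpr ⟨hne.symm, Finset.mem_univ l⟩)
        exact Quaternion.normSq_eq_zero.mp h2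
      refine ⟨(∑ i, t i) / d, by positivity, ?_⟩
      apply Matrix.ext
      intro i l
      rw [hMent i l, smul_one_apply]
      by_cases h : i = l
      · subst h
        rw [if_pos rfl, hTdiag i, hconst i]
      · rw [if_neg h, hoffzero i l h]
    · rintro ⟨A, hA, hMA⟩
      have hTA : ∀ i l, T i l = if i = l then ((A:ℝ) : ℍ[ℝ]) else 0 := by
        intro i l
        rw [← hMent i l, hMA, smul_one_apply]
      have htA : ∀ i, t i = A := by
        intro i
        have h4 := hTdiag i
        rw [hTA i i, if_pos rfl] at h4
        exact Quaternion.coe_injective h4.symm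
      rw [hkey, htrace]
      have h1 : ∑ i, ∑ l, Quaternion.normSq (T i l) = (d:ℝ) * A ^ 2 := by
        have h5 : ∀ i : Fin d, ∑ l, Quaternion.normSq (T i l) = A ^ 2 := by
          intro i
          rw [Finset.sum_eq_single i]
          · rw [hTA i i, if_pos rfl, Quaternion.normSq_coe]
          · intro l _ hne
            rw [hTA i l, if_neg (fun h => hne h.symm)]
            simp
          · intro h; exact absurd (Finset.mem_univ i) h
        rw [Finset.sum_congr rfl fun i _ => h5 i]
        simp [Finset.card_univ, mul_comm]
      have h2 : ∑ i, t i = (d:ℝ) * A := by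
        rw [Finset.sum_congr rfl fun i _ => htA i]
        simp [Finset.card_univ, mul_comm]
      rw [h1, h2]
      field_simp
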